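/- Let H be a real Hilbert space (a complete real inner product space) and let D, L : H →L[ℝ] H be bounded self-adjoint operators such that L ∘ L = id and D ∘ L = -(L ∘ D). Then for every real number τ ≠ 0 the bounded operator D - (τ/2) • L is bijective. -/

import Mathlib

open scoped RealInnerProductSpace

/-- If `D` and `L` are bounded self-adjoint operators on a real Hilbert space with
`L ∘ L = id` and `D ∘ L = -(L ∘ D)`, then `D - (τ/2) • L` is bijective for every `τ ≠ 0`. -/
theorem diracWitten_bijective
    {H : Type*} [NormedAddCommGroup H] [InnerProductSpace ℝ H] [CompleteSpace H]
    (D L : H →L[ℝ] H)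
    (hD : ∀ x y : H, ⟪D x, y⟫ = ⟪x, D y⟫)
    (hL : ∀ x y : H, ⟪L x, y⟫ = ⟪x, L y⟫)
    (hL2 : L.comp L = ContinuousLinearMap.id ℝ H)
    (hanti : D.comp L = -(L.comp D))
    (τ : ℝ) (hτ : τ ≠ 0) :
    Function.Bijective (D - (τ / 2) • L) := by
  set c : ℝ := τ / 2 with hc
  have hc0 : c ≠ 0 := by
    simp [hc, div_eq_mul_inv, hτ]
  set A : H →L[ℝ] H := D - c • L with hA
  -- A is symmetric
  have hsym : ∀ x y : H, ⟪A x, y⟫ = ⟪x, A y⟫ := by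
    intro x y
    simp only [hA, ContinuousLinearMap.sub_apply, ContinuousLinearMap.smul_apply,
      inner_sub_left, inner_sub_right, real_inner_smul_left, real_inner_smul_right,
      hD x y, hL x y]
  -- cross term vanishes
  have hcross : ∀ x : H, ⟪D x, L x⟫ = 0 := by
    intro x
    have h1 : ⟪D x, L x⟫ = ⟪x, D (L x)⟫ := hD x (L x)
    have h2 : D (L x) = -(L (D x)) := by
      have := congrArg (fun f : H →L[ℝ] H => f x) hanti
      simpa using this
    have h3 : ⟪D x, L x⟫ = -⟪x, L (D x)⟫ := by rw [h1, h2, inner_neg_right]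
    have h4 : ⟪x, L (D x)⟫ = ⟪L x, D x⟫ := by
      rw [← hL x (D x)]
    have h5 : ⟪L x, D x⟫ = ⟪D x, L x⟫ := real_inner_comm _ _
    linarith [h3, h4, h5]
  have hLnorm : ∀ x : H, ‖L x‖ ^ 2 = ‖x‖ ^ 2 := by
    intro x
    have h1 : ⟪L x, L x⟫ = ⟪x, x⟫ := by
      rw [hL x (L x)]
      have := congrArg (fun f : H →L[ℝ] H => f x) hL2
      simp only [ContinuousLinearMap.comp_apply, ContinuousLinearMap.id_apply] at this
      rw [this]
    rw [← real_inner_self_eq_norm_sq, ← real_inner_self_eq_norm_sq, h1]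
  -- lower bound
  have hnormsq : ∀ x : H, ‖A x‖ ^ 2 = ‖D x‖ ^ 2 + c ^ 2 * ‖x‖ ^ 2 := by
    intro x
    have : A x = D x - c • L x := by simp [hA]
    rw [this, norm_sub_sq_real, real_inner_smul_right, hcross, norm_smul]
    have := hLnorm x
    simp only [Real.norm_eq_abs, mul_pow, sq_abs]
    rw [this]
    ring
  have hlow : ∀ x : H, |c| * ‖x‖ ≤ ‖A x‖ := by
    intro x
    have h1 : (|c| * ‖x‖) ^ 2 ≤ ‖A x‖ ^ 2 := by
      rw [hnormsq x, mul_pow, sq_abs]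
      nlinarith [sq_nonneg ‖D x‖]
    have h2 := Real.sqrt_le_sqrt h1
    rwa [Real.sqrt_sq (by positivity), Real.sqrt_sq (norm_nonneg _)] at h2
  have hinj : Function.Injective A := by
    intro x y hxy
    have : A (x - y) = 0 := by simp [map_sub, hxy]
    have h := hlow (x - y)
    rw [this, norm_zero] at h
    have : ‖x - y‖ = 0 := by
      have := mul_nonneg (abs_nonneg c) (norm_nonneg (x - y))
      have hcpos : 0 < |c| := abs_pos.mpr hc0
      nlinarith [norm_nonneg (x - y)]
    exact sub_eq_zero.mp (norm_eq_zero.mp this)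
  -- antilipschitz ⇒ closed range
  have hanti' : AntilipschitzWith (⟨|c|, abs_nonneg c⟩ : NNReal)⁻¹ A := by
    refine ContinuousLinearMap.antilipschitz_of_bound A ?_
    intro x
    have hcpos : 0 < |c| := abs_pos.mpr hc0
    show ‖x‖ ≤ |c|⁻¹ * ‖A x‖
    rw [inv_mul_eq_div, le_div_iff₀ hcpos]
    nlinarith [hlow x]
  have hclosed : IsClosed (Set.range A) :=
    hanti'.isClosed_range A.uniformContinuous
  have hclosed' : IsClosed ((LinearMap.range (A : H →ₗ[ℝ] H) : Submodule ℝ H) : Set H) := by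
    have : ((LinearMap.range (A : H →ₗ[ℝ] H) : Submodule ℝ H) : Set H) = Set.range A := by
      ext x; simp [LinearMap.mem_range]
    rw [this]; exact hclosed
  haveI : CompleteSpace (LinearMap.range (A : H →ₗ[ℝ] H) : Submodule ℝ H) :=
    hclosed'.completeSpace_coe
  have hbot : (LinearMap.range (A : H →ₗ[ℝ] H) : Submodule ℝ H)ᗮ = ⊥ := by
    rw [Submodule.eq_bot_iff]
    intro y hy
    have hAy : A y = 0 := by
      have h0 : ∀ x : H, ⟪x, A y⟫ = 0 := by
        intro x
        rw [← hsym x y]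
        have : A x ∈ LinearMap.range (A : H →ₗ[ℝ] H) := LinearMap.mem_range_self _ x
        exact (Submodule.mem_orthogonal _ _ |>.mp hy) (A x) this
      have := h0 (A y)
      rwa [real_inner_self_eq_norm_sq, pow_eq_zero_iff (by norm_num), norm_eq_zero] at this
    have := hlow y
    rw [hAy, norm_zero] at this
    have hcpos : 0 < |c| := abs_pos.mpr hc0
    have : ‖y‖ = 0 := by nlinarith [norm_nonneg y]
    exact norm_eq_zero.mp this
  have htop : (LinearMap.range (A : H →ₗ[ℝ] H) : Submodule ℝ H) = ⊤ :=
    Submodule.orthogonal_eq_bot_iff.mp hbot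
  have hsurj : Function.Surjective A := by
    intro y
    have : y ∈ (LinearMap.range (A : H →ₗ[ℝ] H) : Submodule ℝ H) := htop ▸ Submodule.mem_top
    exact this
  exact ⟨hinj, hsurj⟩
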